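/- If I ⊆ S is a prime homogeneous ideal containing no linear form, then I has no linear n-th syzygy of rank at most n+1. -/

import Mathlib

open MvPolynomial Finset

noncomputable section

variable {k : Type*} [Field k] {N : ℕ}

/-- The Koszul sign of the variable `i` inside the subset `s`: `(−1)^{p}` where `p` is
the number of elements of `s` strictly smaller than `i`. -/
def ksgn (s : Finset (Fin N)) (i : Fin N) : ℤ := (-1) ^ (s.filter (· < i)).card

/-- Chain data for an element of `Λ^{n+1}V ⊗ V` (with `V = S₁` the space of linear
forms of `S = k[x₀,…,x_{N−1}]`), expressed in the standard monomial basis of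
`Λ^{n+1}V`: a family of linear forms indexed by the `(n+1)`-element subsets of the
variables. -/
def IsLinChain (n : ℕ) (c : Finset (Fin N) → MvPolynomial (Fin N) k) : Prop :=
  ∀ s, (c s).IsHomogeneous 1 ∧ (s.card ≠ n + 1 → c s = 0)

/-- `c` represents a cycle for the middle homology of
`Λ^{n+2}V → Λ^{n+1}V ⊗ V → Λ^{n}V ⊗ (S/I)₂`, i.e. the image of `c` under the Koszul
differential lies in `Λ^{n}V ⊗ I₂`. -/
def IsLinCycle (I : Ideal (MvPolynomial (Fin N) k)) (n : ℕ)
    (c : Finset (Fin N) → MvPolynomial (Fin N) k) : Prop :=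
  IsLinChain n c ∧ ∀ t : Finset (Fin N), t.card = n →
    (∑ i ∈ tᶜ, ksgn (insert i t) i • (X i * c (insert i t))) ∈ I

/-- `c` is the Koszul boundary of an element of `Λ^{n+2}V`. -/
def IsLinBoundary (n : ℕ) (c : Finset (Fin N) → MvPolynomial (Fin N) k) : Prop :=
  ∃ b : Finset (Fin N) → k, ∀ s : Finset (Fin N), s.card = n + 1 →
    c s = ∑ i ∈ sᶜ, ksgn (insert i s) i • (b (insert i s) • X i)

/-- `c` gives a nonzero class in `Tor_{n+1}(S/I,k)_{n+2}`,
i.e. a linear `n`-th syzygy of `I`. -/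
def IsLinSyzygy (I : Ideal (MvPolynomial (Fin N) k)) (n : ℕ)
    (c : Finset (Fin N) → MvPolynomial (Fin N) k) : Prop :=
  IsLinCycle I n c ∧ ¬ IsLinBoundary n c

/-- `b_{n+1,n+2}(S/I) ≠ 0`: the space of linear `n`-th syzygies is nonzero. -/
def HasLinSyzygy (I : Ideal (MvPolynomial (Fin N) k)) (n : ℕ) : Prop :=
  ∃ c, IsLinSyzygy I n c

/-- `2LP(S/I) = m`: `m` is the largest `i` with `b_{i,i+1}(S/I) ≠ 0`
(recall `b_{n+1,n+2} ≠ 0` iff there is a linear `n`-th syzygy). -/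
def TwoLPeq (I : Ideal (MvPolynomial (Fin N) k)) (m : ℕ) : Prop :=
  (m ≠ 0 ∧ HasLinSyzygy I (m - 1)) ∧ ∀ j : ℕ, m - 1 < j → ¬ HasLinSyzygy I j

/-- The coefficient of the variable `x_i` in a linear form. -/
def coeffOf (i : Fin N) (w : MvPolynomial (Fin N) k) : k := coeff (Finsupp.single i 1) w

/-- The chain `c` lies in `Λ^{n+1}W ⊗ V` for the subspace `W ≤ V = S₁`: every linear
functional on `V` vanishing on `W` contracts `c` to zero. -/
def SupportedOn (W : Submodule k (MvPolynomial (Fin N) k)) (n : ℕ)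
    (c : Finset (Fin N) → MvPolynomial (Fin N) k) : Prop :=
  ∀ a : Fin N → k, (∀ w ∈ W, ∑ i, a i * coeffOf i w = 0) →
    ∀ t : Finset (Fin N), t.card = n →
      ∑ i ∈ tᶜ, ksgn (insert i t) i • (a i • c (insert i t)) = 0

/-- The class of the cycle `c` can be represented by a cycle lying in
`Λ^{n+1}W ⊗ V`. -/
def RepresentedOn (I : Ideal (MvPolynomial (Fin N) k)) (n : ℕ)
    (c : Finset (Fin N) → MvPolynomial (Fin N) k)
    (W : Submodule k (MvPolynomial (Fin N) k)) : Prop :=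
  ∃ c', IsLinCycle I n c' ∧ SupportedOn W n c' ∧
    IsLinBoundary n (fun s => c s - c' s)

/-- The (nonzero) class of `c` has rank `r`: it is represented on some `r`-dimensional
subspace of `V = S₁` and on no subspace of smaller dimension. -/
def SyzygyRank (I : Ideal (MvPolynomial (Fin N) k)) (n : ℕ)
    (c : Finset (Fin N) → MvPolynomial (Fin N) k) (r : ℕ) : Prop :=
  (∃ W ≤ homogeneousSubmodule (Fin N) k 1,
      Module.finrank k W = r ∧ RepresentedOn I n c W) ∧
  ∀ W ≤ homogeneousSubmodule (Fin N) k 1,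
      RepresentedOn I n c W → r ≤ Module.finrank k W

/-- `I` has a linear `n`-th syzygy of rank `r`. -/
def HasLinSyzygyOfRank (I : Ideal (MvPolynomial (Fin N) k)) (n r : ℕ) : Prop :=
  ∃ c, IsLinSyzygy I n c ∧ SyzygyRank I n c r

/-- `I` has a linear `n`-th syzygy of rank at most `r`. -/
def HasLinSyzygyOfRankLE (I : Ideal (MvPolynomial (Fin N) k)) (n r : ℕ) : Prop :=
  ∃ c, IsLinSyzygy I n c ∧ ∃ W ≤ homogeneousSubmodule (Fin N) k 1,
    Module.finrank k W ≤ r ∧ RepresentedOn I n c W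

/-- A homogeneous ideal. -/
def IsHomogeneousIdeal (I : Ideal (MvPolynomial (Fin N) k)) : Prop :=
  ∀ f ∈ I, ∀ m : ℕ, homogeneousComponent m f ∈ I

/-- A matrix of linear forms. -/
def IsLinearMatrix {p q : ℕ} (M : Matrix (Fin p) (Fin q) (MvPolynomial (Fin N) k)) : Prop :=
  ∀ i j, (M i j).IsHomogeneous 1

/-- A matrix of linear forms is 1-generic if all its generalized entries `uMv`
(for nonzero row and column vectors `u`, `v` over `k`) are nonzero. -/
def OneGeneric {p q : ℕ} (M : Matrix (Fin p) (Fin q) (MvPolynomial (Fin N) k)) : Prop :=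
  IsLinearMatrix M ∧ ∀ u : Fin p → k, u ≠ 0 → ∀ v : Fin q → k, v ≠ 0 →
    (∑ i, ∑ j, u i • v j • M i j) ≠ 0

/-- All 2×2 minors of `M` belong to `I`. -/
def MinorsIn {p q : ℕ} (M : Matrix (Fin p) (Fin q) (MvPolynomial (Fin N) k))
    (I : Ideal (MvPolynomial (Fin N) k)) : Prop :=
  ∀ i i' j j', M i j * M i' j' - M i j' * M i' j ∈ I

end

/-!
STATEMENT 5: If `I ⊆ S` is a prime homogeneous ideal containing no linear form, then
`I` has no linear `n`-th syzygy of rank at most `n+1`.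
-/

section Auxiliary

open MvPolynomial Finset

variable {k : Type*} [Field k] {N : ℕ}

lemma ksgn_smul_ksgn_smul {M : Type*} [AddCommGroup M] (s : Finset (Fin N)) (i : Fin N)
    (x : M) : ksgn s i • ksgn s i • x = x := by
  rw [smul_smul, ksgn, ← pow_add, Even.neg_one_pow ⟨_, rfl⟩, one_smul]

lemma pivot_lemma (W : Submodule k (MvPolynomial (Fin N) k)) [FiniteDimensional k W]
    (m : ℕ) (hdim : Module.finrank k W ≤ m) :
    ∃ J : Finset (Fin N), J.card ≤ m ∧ ∀ i ∉ J, ∃ a : Fin N → k,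
      (∀ w ∈ W, ∑ j, a j * coeffOf j w = 0) ∧ a i = 1 ∧
      ∀ j, j ∉ J → j ≠ i → a j = 0 := by
  classical
  set f : Fin N → Module.Dual k W :=
    fun j => (MvPolynomial.lcoeff k (Finsupp.single j 1)).comp W.subtype with hf
  obtain ⟨Iset, hli, hspan⟩ := exists_maximal_linearIndepOn k f
  haveI : Fintype Iset := (Set.toFinite Iset).fintype
  refine ⟨Iset.toFinset, ?_, ?_⟩
  · have hcard := LinearIndependent.fintype_card_le_finrank hli
    rw [Subspace.dual_finrank_eq] at hcard
    rw [Set.toFinset_card]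
    exact le_trans hcard hdim
  · intro i hi
    have hiI : i ∉ Iset := fun h => hi (Set.mem_toFinset.2 h)
    obtain ⟨a0, ha0, hmem⟩ := hspan i hiI
    have hfi : f i ∈ Submodule.span k (f '' Iset) :=
      (Submodule.smul_mem_iff _ ha0).1 hmem
    rw [Finsupp.mem_span_image_iff_linearCombination] at hfi
    obtain ⟨l, hlsupp, hlsum⟩ := hfi
    have hli0 : l i = 0 := by
      rw [Finsupp.mem_supported] at hlsupp
      by_contra h
      exact hiI (hlsupp (Finsupp.mem_support_iff.2 h))
    refine ⟨fun j => (if j = i then 1 else 0) - l j, ?_, by simp [hli0], ?_⟩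
    · intro w hw
      have hev := LinearMap.congr_fun hlsum ⟨w, hw⟩
      rw [Finsupp.linearCombination_apply,
        Finsupp.sum_fintype _ _ (fun j => zero_smul k (f j))] at hev
      simp only [LinearMap.coe_sum, Finset.sum_apply, LinearMap.smul_apply,
        smul_eq_mul] at hev
      have hfj : ∀ j, f j ⟨w, hw⟩ = coeffOf j w := fun j => rfl
      simp only [hfj] at hev
      simp only [sub_mul, Finset.sum_sub_distrib, ite_mul, one_mul, zero_mul,
        Finset.sum_ite_eq', Finset.mem_univ, if_true, hev]
      exact sub_self _
    · intro j hj hji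
      have : l j = 0 := by
        rw [Finsupp.mem_supported] at hlsupp
        by_contra h
        exact hj (Set.mem_toFinset.2 (hlsupp (Finsupp.mem_support_iff.2 h)))
      simp [hji, this]

end Auxiliary

theorem no_low_rank_linear_syzygy {k : Type*} [Field k] {N : ℕ}
    (I : Ideal (MvPolynomial (Fin N) k)) (hprime : I.IsPrime)
    (hhom : IsHomogeneousIdeal I)
    (hnolin : ∀ f ∈ I, f.IsHomogeneous 1 → f = 0) (n : ℕ) :
    ¬ HasLinSyzygyOfRankLE I n (n + 1) := by
  classical
  rintro ⟨c, hsyz, W, hW, hdim, c', hc'cyc, hsup, hbd⟩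
  haveI hfd : FiniteDimensional k W := by
    refine Submodule.finiteDimensional_of_le
      (S₂ := MvPolynomial.restrictTotalDegree (Fin N) k 1) (le_trans hW ?_)
    intro p hp
    exact (MvPolynomial.mem_restrictTotalDegree _ _ _).2
      (MvPolynomial.IsHomogeneous.totalDegree_le hp)
  obtain ⟨J, hJcard, hpiv⟩ := pivot_lemma W (n + 1) hdim
  -- Step 2 : every value of `c'` on an (n+1)-set lies in the line spanned by `c' J`
  have key : ∀ d : ℕ, ∀ s : Finset (Fin N), s.card = n + 1 → (s \ J).card = d →
      c' s ∈ Submodule.span k {c' J} := by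
    intro d
    induction d using Nat.strong_induction_on with
    | _ d ih =>
      intro s hs hd
      rcases Nat.eq_zero_or_pos d with h0 | hpos
      · have hsub : s ⊆ J := by
          rw [h0, Finset.card_eq_zero, Finset.sdiff_eq_empty_iff_subset] at hd
          exact hd
        have hsJ : s = J := Finset.eq_of_subset_of_card_le hsub (by rw [hs]; exact hJcard)
        rw [hsJ]
        exact Submodule.mem_span_singleton_self _
      · obtain ⟨i, hi⟩ := Finset.card_pos.1 (hd ▸ hpos)
        have his : i ∈ s := (Finset.mem_sdiff.1 hi).1
        have hiJ : i ∉ J := (Finset.mem_sdiff.1 hi).2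
        obtain ⟨a, haW, hai, ha0⟩ := hpiv i hiJ
        set t := s.erase i with htdef
        have ht : t.card = n := by
          rw [htdef, Finset.card_erase_of_mem his, hs]
          omega
        have hit : i ∉ t := Finset.notMem_erase _ _
        have hins : insert i t = s := Finset.insert_erase his
        have hitc : i ∈ tᶜ := Finset.mem_compl.2 hit
        have hrel := hsup a haW t ht
        rw [← Finset.add_sum_erase _ _ hitc, hai, one_smul, hins] at hrel
        have hneg : ksgn s i • c' s =
            -∑ x ∈ tᶜ.erase i, ksgn (insert x t) x • (a x • c' (insert x t)) :=
          eq_neg_of_add_eq_zero_left hrel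
        have heq : c' s = ksgn s i •
            -∑ x ∈ tᶜ.erase i, ksgn (insert x t) x • (a x • c' (insert x t)) := by
          rw [← hneg, ksgn_smul_ksgn_smul]
        rw [heq]
        refine zsmul_mem (neg_mem (Submodule.sum_mem _ ?_)) _
        intro x hx
        have hxi : x ≠ i := Finset.ne_of_mem_erase hx
        have hxt : x ∉ t := Finset.mem_compl.1 (Finset.mem_of_mem_erase hx)
        by_cases hxJ : x ∈ J
        · have hcard : (insert x t).card = n + 1 := by
            rw [Finset.card_insert_of_notMem hxt, ht]
          have hsd : (insert x t) \ J = (s \ J).erase i := by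
            rw [Finset.insert_sdiff_of_mem _ hxJ]
            ext y
            simp only [htdef, Finset.mem_sdiff, Finset.mem_erase]
            tauto
          have hlt : ((insert x t) \ J).card < d := by
            rw [hsd, ← hd]
            exact Finset.card_erase_lt_of_mem hi
          exact zsmul_mem (Submodule.smul_mem _ _
            (ih _ hlt _ hcard rfl)) _
        · rw [ha0 x hxJ hxi, zero_smul, smul_zero]
          exact Submodule.zero_mem _
  -- choose the scalars
  have hlam : ∀ s : Finset (Fin N), s.card = n + 1 → ∃ lam : k, c' s = lam • c' J := by
    intro s hs
    obtain ⟨a, ha⟩ := Submodule.mem_span_singleton.1 (key _ s hs rfl)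
    exact ⟨a, ha.symm⟩
  set lam : Finset (Fin N) → k :=
    fun s => if h : s.card = n + 1 then (hlam s h).choose else 0 with hlamdef
  have hlamspec : ∀ s : Finset (Fin N), s.card = n + 1 → c' s = lam s • c' J := by
    intro s hs
    rw [hlamdef]
    simp only [dif_pos hs]
    exact (hlam s hs).choose_spec
  -- Step 3 : all values of c' on (n+1)-sets vanish
  have hzero : ∀ s : Finset (Fin N), s.card = n + 1 → c' s = 0 := by
    by_cases hv : c' J = 0
    · intro s hs
      rw [hlamspec s hs, hv, smul_zero]
    · have hvh : (c' J).IsHomogeneous 1 := (hc'cyc.1 J).1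
      have hvI : c' J ∉ I := fun h => hv (hnolin _ h hvh)
      intro s hs
      obtain ⟨i, his⟩ := Finset.card_pos.1 (by rw [hs]; exact Nat.succ_pos n)
      set t := s.erase i with htdef
      have ht : t.card = n := by
        rw [htdef, Finset.card_erase_of_mem his, hs]
        omega
      have hit : i ∉ t := Finset.notMem_erase _ _
      have hins : insert i t = s := Finset.insert_erase his
      have hitc : i ∈ tᶜ := Finset.mem_compl.2 hit
      have hcyc := hc'cyc.2 t ht
      set L : MvPolynomial (Fin N) k :=
        ∑ x ∈ tᶜ, ksgn (insert x t) x • (lam (insert x t) • X x) with hLdef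
      have hcards : ∀ x ∈ tᶜ, (insert x t).card = n + 1 := by
        intro x hx
        rw [Finset.card_insert_of_notMem (Finset.mem_compl.1 hx), ht]
      have hfactor : (∑ x ∈ tᶜ, ksgn (insert x t) x • (X x * c' (insert x t))) = L * c' J := by
        rw [hLdef, Finset.sum_mul]
        refine Finset.sum_congr rfl fun x hx => ?_
        rw [hlamspec _ (hcards x hx), mul_smul_comm, smul_mul_assoc, smul_mul_assoc]
      rw [hfactor] at hcyc
      have hLI : L ∈ I := by
        rcases hprime.mem_or_mem hcyc with h | h
        · exact h
        · exact absurd h hvI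
      have hLh : L.IsHomogeneous 1 := by
        rw [← MvPolynomial.mem_homogeneousSubmodule]
        refine Submodule.sum_mem _ fun x hx => ?_
        refine zsmul_mem (Submodule.smul_mem _ _ ?_) _
        rw [MvPolynomial.mem_homogeneousSubmodule]
        exact MvPolynomial.isHomogeneous_X _ _
      have hL0 : L = 0 := hnolin L hLI hLh
      have hco : coeffOf i L = ksgn s i • lam s := by
        rw [coeffOf, hLdef, MvPolynomial.coeff_sum]
        rw [Finset.sum_eq_single i]
        · rw [hins, MvPolynomial.coeff_smul, MvPolynomial.coeff_smul,
            MvPolynomial.coeff_X', if_pos rfl, smul_eq_mul, mul_one]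
        · intro b hb hbi
          rw [MvPolynomial.coeff_smul, MvPolynomial.coeff_smul,
            MvPolynomial.coeff_X', if_neg, smul_zero, smul_zero]
          exact fun hc => hbi (Finsupp.single_left_injective one_ne_zero hc)
        · intro h
          exact absurd hitc h
      rw [hL0] at hco
      have hlam0 : lam s = 0 := by
        have := congrArg (fun z => ksgn s i • z) hco.symm
        simpa only [ksgn_smul_ksgn_smul, smul_zero, coeffOf,
          MvPolynomial.coeff_zero] using this
      rw [hlamspec s hs, hlam0, zero_smul]
  -- conclude : c itself is a boundary
  obtain ⟨b, hb⟩ := hbd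
  refine hsyz.2 ⟨b, fun s hs => ?_⟩
  have := hb s hs
  simp only [hzero s hs, sub_zero] at this
  exact this
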